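/- A bounded (or unbounded) cochain complex F of R-modules is a flat complex (i.e., F is exact and all kernels ker ∂^n are flat modules) if and only if the dual complex F^+ = Hom_R(F, J) is an exact complex of injective modules with injective cycle modules, where J is an injective cogenerator. -/

import Mathlib

open TensorProduct LinearMap

section Defs
variable (R : Type) [CommRing R]

/-- `f, g` form a short exact sequence `0 → A → B → C → 0`. -/
def ShortExactSeq {A B C : Type} [AddCommGroup A] [AddCommGroup B] [AddCommGroup C]
    [Module R A] [Module R B] [Module R C] (f : A →ₗ[R] B) (g : B →ₗ[R] C) : Prop :=
  Function.Injective f ∧ Function.Exact f g ∧ Function.Surjective g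

/-- The short exact sequence stays exact after tensoring with any module: purity. -/
def IsPureSeq {A B C : Type} [AddCommGroup A] [AddCommGroup B] [AddCommGroup C]
    [Module R A] [Module R B] [Module R C] (f : A →ₗ[R] B) (g : B →ₗ[R] C) : Prop :=
  ∀ (M : Type) [AddCommGroup M] [Module R M],
    ShortExactSeq R (f.lTensor M) (g.lTensor M)

/-- Pure injectivity: maps into `E` extend along pure monomorphisms. -/
def IsPureInjective (E : Type) [AddCommGroup E] [Module R E] : Prop :=
  ∀ (A B C : Type) [AddCommGroup A] [AddCommGroup B] [AddCommGroup C]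
    [Module R A] [Module R B] [Module R C] (f : A →ₗ[R] B) (g : B →ₗ[R] C),
    ShortExactSeq R f g → IsPureSeq R f g →
    ∀ h : A →ₗ[R] E, ∃ h' : B →ₗ[R] E, h'.comp f = h

/-- `J` is an injective cogenerator: it is injective and `Hom(-, J)` is faithful. -/
def IsInjectiveCogenerator (J : Type) [AddCommGroup J] [Module R J] : Prop :=
  Module.Injective R J ∧
  ∀ (M : Type) [AddCommGroup M] [Module R M], (∀ φ : M →ₗ[R] J, φ = 0) → Subsingleton M

/-- The canonical evaluation map `λ_F : F → Hom(Hom(F, J), J)`, `x ↦ (φ ↦ φ x)`. -/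
noncomputable def lamMap (J : Type) [AddCommGroup J] [Module R J]
    (F : Type) [AddCommGroup F] [Module R F] : F →ₗ[R] ((F →ₗ[R] J) →ₗ[R] J) :=
  LinearMap.applyₗ

end Defs

section MyHelpers
variable {R : Type} [CommRing R]

theorem myInjective_of_lequiv {M N : Type} [AddCommGroup M] [AddCommGroup N]
    [Module R M] [Module R N] (e : M ≃ₗ[R] N) (h : Module.Injective R M) :
    Module.Injective R N := by
  constructor
  intro A B _ _ _ _ f hf g
  obtain ⟨h', hh'⟩ := h.out f hf (e.symm.toLinearMap ∘ₗ g)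
  exact ⟨e.toLinearMap ∘ₗ h', fun x => by simp [hh' x]⟩

theorem myDual_injective_of_flat {J M : Type} [AddCommGroup J] [Module R J]
    [AddCommGroup M] [Module R M] (hJ : Module.Injective R J) (hM : Module.Flat R M) :
    Module.Injective R (M →ₗ[R] J) := by
  constructor
  intro A B _ _ _ _ f hf g
  obtain ⟨h', hh'⟩ := hJ.out (f.rTensor M)
    (Module.Flat.rTensor_preserves_injective_linearMap f hf) (TensorProduct.lift g)
  refine ⟨TensorProduct.curry h', fun a => ?_⟩
  ext m
  simpa using hh' (a ⊗ₜ m)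

theorem myFlat_of_dual_injective {J M : Type} [AddCommGroup J] [Module R J]
    [AddCommGroup M] [Module R M] (hJ : IsInjectiveCogenerator R J)
    (h : Module.Injective R (M →ₗ[R] J)) : Module.Flat R M := by
  rw [Module.Flat.iff_rTensor_preserves_injective_linearMap]
  intro N N' _ _ _ _ f hf
  rw [← LinearMap.ker_eq_bot]
  have hsub : Subsingleton (LinearMap.ker (f.rTensor M)) := by
    apply hJ.2
    intro φ
    obtain ⟨φ', hφ'⟩ := hJ.1.out (LinearMap.ker (f.rTensor M)).subtype
      (Submodule.injective_subtype _) φ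
    obtain ⟨ψ, hψ⟩ := h.out f hf (TensorProduct.curry φ')
    have key : TensorProduct.lift ψ ∘ₗ (f.rTensor M) = φ' := by
      apply TensorProduct.ext'
      intro n m
      simp [hψ n]
    ext x
    have h1 : φ x = φ' x.1 := (hφ' x).symm
    have h2 : φ' x.1 = TensorProduct.lift ψ ((f.rTensor M) x.1) := by
      rw [← key]; rfl
    have h3 : (f.rTensor M) x.1 = 0 := LinearMap.mem_ker.mp x.2
    simp [h1, h2, h3]
  exact Submodule.eq_bot_of_subsingleton

theorem myDual_exact {J A B C : Type} [AddCommGroup J] [Module R J]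
    [AddCommGroup A] [AddCommGroup B] [AddCommGroup C] [Module R A] [Module R B] [Module R C]
    (hJ : Module.Injective R J) (f : A →ₗ[R] B) (g : B →ₗ[R] C)
    (hfg : Function.Exact f g) :
    Function.Exact (LinearMap.lcomp R J g) (LinearMap.lcomp R J f) := by
  rw [LinearMap.exact_iff]
  ext φ
  simp only [LinearMap.mem_ker, LinearMap.mem_range]
  constructor
  · intro hφ
    have hker : LinearMap.ker g ≤ LinearMap.ker φ := by
      rw [LinearMap.exact_iff.mp hfg]
      rintro _ ⟨a, rfl⟩
      simpa using LinearMap.congr_fun hφ a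
    obtain ⟨ψ, hψ⟩ := hJ.out (LinearMap.range g).subtype (Submodule.injective_subtype _)
      ((Submodule.liftQ (LinearMap.ker g) φ hker) ∘ₗ (g.quotKerEquivRange).symm.toLinearMap)
    refine ⟨ψ, ?_⟩
    ext b
    have h1 := hψ ⟨g b, ⟨b, rfl⟩⟩
    have h2 : (g.quotKerEquivRange).symm ⟨g b, ⟨b, rfl⟩⟩ = Submodule.Quotient.mk b := by
      exact LinearMap.quotKerEquivRange_symm_apply_image _ _ _
    show ψ (g b) = φ b
    calc ψ (g b) = ψ ((LinearMap.range g).subtype ⟨g b, ⟨b, rfl⟩⟩) := rfl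
      _ = ((Submodule.liftQ (LinearMap.ker g) φ hker) ∘ₗ
            (g.quotKerEquivRange).symm.toLinearMap) ⟨g b, ⟨b, rfl⟩⟩ := h1
      _ = φ b := by
            rw [LinearMap.coe_comp, Function.comp_apply, LinearEquiv.coe_coe, h2]
            exact Submodule.liftQ_apply _ _ _
  · rintro ⟨ψ, rfl⟩
    ext a
    simp [hfg.apply_apply_eq_zero a]

theorem myExact_of_dual_exact {J A B C : Type} [AddCommGroup J] [Module R J]
    [AddCommGroup A] [AddCommGroup B] [AddCommGroup C] [Module R A] [Module R B] [Module R C]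
    (hJ : IsInjectiveCogenerator R J)
    (f : A →ₗ[R] B) (g : B →ₗ[R] C) (hgf : g ∘ₗ f = 0)
    (hd : Function.Exact (LinearMap.lcomp R J g) (LinearMap.lcomp R J f)) :
    Function.Exact f g := by
  rw [LinearMap.exact_iff]
  refine le_antisymm ?_ (LinearMap.range_le_ker_iff.mpr hgf)
  set K := LinearMap.ker g with hK
  set S : Submodule R K := (LinearMap.range f).comap K.subtype with hSdef
  have hS : S = ⊤ := by
    rw [← Submodule.Quotient.subsingleton_iff]
    apply hJ.2
    intro φ
    obtain ⟨ψ, hψ⟩ := hJ.1.out K.subtype (Submodule.injective_subtype _) (φ ∘ₗ S.mkQ)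
    have hψf : LinearMap.lcomp R J f ψ = 0 := by
      ext a
      have hmem : f a ∈ K := by
        rw [hK, LinearMap.mem_ker]
        exact LinearMap.congr_fun hgf a
      have hz : S.mkQ ⟨f a, hmem⟩ = 0 := by
        rw [Submodule.mkQ_apply, Submodule.Quotient.mk_eq_zero]
        exact ⟨a, rfl⟩
      show ψ (f a) = 0
      calc ψ (f a) = ψ (K.subtype ⟨f a, hmem⟩) := rfl
        _ = (φ ∘ₗ S.mkQ) ⟨f a, hmem⟩ := hψ _
        _ = 0 := by rw [LinearMap.coe_comp, Function.comp_apply, hz, map_zero]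
    obtain ⟨σ, hσ⟩ := (hd ψ).mp hψf
    refine LinearMap.ext fun q => ?_
    obtain ⟨z, rfl⟩ := Submodule.Quotient.mk_surjective S q
    have h1 : (φ ∘ₗ S.mkQ) z = ψ (K.subtype z) := (hψ z).symm
    have hz0 : g z.1 = 0 := z.2
    have hσz : ψ z.1 = σ (g z.1) := by rw [← hσ]; rfl
    simpa [hσz, hz0] using h1
  intro x hx
  have hmem : (⟨x, hx⟩ : K) ∈ S := hS ▸ Submodule.mem_top
  simpa [hSdef] using hmem

noncomputable def kerLcompEquiv {J A B C : Type} [AddCommGroup J] [Module R J]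
    [AddCommGroup A] [AddCommGroup B] [AddCommGroup C] [Module R A] [Module R B] [Module R C]
    (f : A →ₗ[R] B) (g : B →ₗ[R] C) (hgf : g ∘ₗ f = 0)
    (hker : LinearMap.ker g = LinearMap.range f) :
    (↥(LinearMap.range g) →ₗ[R] J) ≃ₗ[R] ↥(LinearMap.ker (LinearMap.lcomp R J f)) := by
  have hmem : ∀ σ : ↥(LinearMap.range g) →ₗ[R] J,
      (LinearMap.lcomp R J g.rangeRestrict) σ ∈ LinearMap.ker (LinearMap.lcomp R J f) := by
    intro σ
    rw [LinearMap.mem_ker]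
    ext a
    have h0 : g.rangeRestrict (f a) = 0 := by
      apply Subtype.ext
      simpa using LinearMap.congr_fun hgf a
    show σ (g.rangeRestrict (f a)) = 0
    rw [h0, map_zero]
  refine LinearEquiv.ofBijective
    (LinearMap.codRestrict (LinearMap.ker (LinearMap.lcomp R J f))
      (LinearMap.lcomp R J g.rangeRestrict) hmem) ⟨?_, ?_⟩
  · intro σ τ h
    have h' := congrArg Subtype.val h
    ext ⟨y, hy⟩
    obtain ⟨b, rfl⟩ := hy
    exact LinearMap.congr_fun h' b
  · rintro ⟨φ, hφ⟩
    have hle : LinearMap.ker g ≤ LinearMap.ker φ := by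
      rw [hker]
      rintro _ ⟨a, rfl⟩
      rw [LinearMap.mem_ker]
      exact LinearMap.congr_fun (LinearMap.mem_ker.mp hφ) a
    refine ⟨(Submodule.liftQ (LinearMap.ker g) φ hle) ∘ₗ
      (g.quotKerEquivRange).symm.toLinearMap, ?_⟩
    apply Subtype.ext
    ext b
    have h2 : (g.quotKerEquivRange).symm ⟨g b, ⟨b, rfl⟩⟩ = Submodule.Quotient.mk b := by
      exact LinearMap.quotKerEquivRange_symm_apply_image _ _ _
    show ((Submodule.liftQ (LinearMap.ker g) φ hle) ∘ₗ
      (g.quotKerEquivRange).symm.toLinearMap) (g.rangeRestrict b) = φ b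
    calc ((Submodule.liftQ (LinearMap.ker g) φ hle) ∘ₗ
        (g.quotKerEquivRange).symm.toLinearMap) (g.rangeRestrict b)
        = (Submodule.liftQ (LinearMap.ker g) φ hle)
            ((g.quotKerEquivRange).symm ⟨g b, ⟨b, rfl⟩⟩) := rfl
      _ = φ b := by rw [h2]; exact Submodule.liftQ_apply _ _ _

theorem myFlat_extension {A B C : Type} [AddCommGroup A] [AddCommGroup B] [AddCommGroup C]
    [Module R A] [Module R B] [Module R C]
    (i : A →ₗ[R] B) (p : B →ₗ[R] C) (hi : Function.Injective i)
    (hex : Function.Exact i p) (hp : Function.Surjective p)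
    (hA : Module.Flat R A) (hC : Module.Flat R C) : Module.Flat R B := by
  rw [Module.Flat.iff_forall_isTrivialRelation]
  intro ι r b hrel
  have hrelC : ∑ j, r j • p (b j) = 0 := by
    have := congrArg p hrel
    simpa [map_sum, map_smul] using this
  obtain ⟨κ, a, c, hc, ha⟩ := Module.Flat.isTrivialRelation_of_sum_smul_eq_zero (M := C) hrelC
  choose b' hb' using fun j => hp (c j)
  have hkermem : ∀ idx, b idx - ∑ j, a idx j • b' j ∈ Set.range i := by
    intro idx
    rw [← hex (b idx - ∑ j, a idx j • b' j)]
    simp [map_sum, map_smul, hb', hc idx]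
  choose α hα using hkermem
  have hrelA : ∑ idx, r idx • α idx = 0 := by
    apply hi
    rw [map_zero, map_sum]
    simp_rw [map_smul, hα, smul_sub, Finset.sum_sub_distrib, hrel, zero_sub,
      neg_eq_zero, Finset.smul_sum]
    rw [Finset.sum_comm]
    apply Finset.sum_eq_zero
    intro j _
    simp_rw [smul_smul, ← Finset.sum_smul, ha j, zero_smul]
  obtain ⟨κ₂, a₂, y₂, hy₂, ha₂⟩ :=
    Module.Flat.isTrivialRelation_of_sum_smul_eq_zero (M := A) hrelA
  refine ⟨κ + κ₂, fun idx => Fin.append (a idx) (a₂ idx),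
    Fin.append b' (fun k => i (y₂ k)), fun idx => ?_, fun j => ?_⟩
  · rw [Fin.sum_univ_add]
    simp only [Fin.append_left, Fin.append_right]
    have h1 : b idx = i (α idx) + ∑ j, a idx j • b' j := by rw [hα]; abel
    rw [h1, hy₂ idx, map_sum]
    simp_rw [map_smul]
    abel
  · refine Fin.addCases (fun j => ?_) (fun k => ?_) j
    · simpa using ha j
    · simpa using ha₂ k

end MyHelpers



/-- a cochain complex `F` is flat (exact with flat kernels) iff its dual
`F⁺` is an exact complex of injective modules with injective cycle modules. -/
theorem stmt9 (R : Type) [CommRing R] (J : Type) [AddCommGroup J] [Module R J]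
    (hJ : IsInjectiveCogenerator R J)
    (X : ℤ → Type) [∀ n, AddCommGroup (X n)] [∀ n, Module R (X n)]
    (d : ∀ n : ℤ, X n →ₗ[R] X (n + 1))
    (hdd : ∀ n : ℤ, (d (n + 1)).comp (d n) = 0) :
    ((∀ n : ℤ, Function.Exact (d n) (d (n + 1))) ∧
      (∀ n : ℤ, Module.Flat R (LinearMap.ker (d n)))) ↔
    ((∀ n : ℤ, Function.Exact (LinearMap.lcomp R J (d (n + 1))) (LinearMap.lcomp R J (d n))) ∧
      (∀ n : ℤ, Module.Injective R (X n →ₗ[R] J)) ∧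
      (∀ n : ℤ, Module.Injective R (LinearMap.ker (LinearMap.lcomp R J (d n))))) := by
  constructor
  · rintro ⟨hex, hflat⟩
    have hflatrange : ∀ n : ℤ, Module.Flat R (LinearMap.range (d n)) := by
      intro n
      rw [← LinearMap.exact_iff.mp (hex n)]
      exact hflat (n + 1)
    have hflatX : ∀ n : ℤ, Module.Flat R (X n) := by
      intro n
      refine myFlat_extension (LinearMap.ker (d n)).subtype (d n).rangeRestrict
        (Submodule.injective_subtype _) ?_ (d n).surjective_rangeRestrict
        (hflat n) (hflatrange n)
      rw [LinearMap.exact_iff, LinearMap.ker_rangeRestrict, Submodule.range_subtype]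
    refine ⟨fun n => myDual_exact hJ.1 (d n) (d (n + 1)) (hex n),
      fun n => myDual_injective_of_flat hJ.1 (hflatX n), fun n => ?_⟩
    exact myInjective_of_lequiv
      (kerLcompEquiv (d n) (d (n + 1)) (hdd n) (LinearMap.exact_iff.mp (hex n)))
      (myDual_injective_of_flat hJ.1 (hflatrange (n + 1)))
  · rintro ⟨hdex, hinjX, hinjker⟩
    have hex : ∀ n : ℤ, Function.Exact (d n) (d (n + 1)) :=
      fun n => myExact_of_dual_exact hJ (d n) (d (n + 1)) (hdd n) (hdex n)
    have hflatrange : ∀ n : ℤ, Module.Flat R (LinearMap.range (d (n + 1))) := by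
      intro n
      refine myFlat_of_dual_injective hJ ?_
      exact myInjective_of_lequiv
        (kerLcompEquiv (d n) (d (n + 1)) (hdd n) (LinearMap.exact_iff.mp (hex n))).symm
        (hinjker n)
    refine ⟨hex, fun n => ?_⟩
    obtain ⟨m, rfl⟩ : ∃ m : ℤ, m + 1 + 1 = n := ⟨n - 2, by ring⟩
    rw [LinearMap.exact_iff.mp (hex (m + 1))]
    exact hflatrange m
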